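/- Let F be a field, V_1, ..., V_N finite-dimensional subspaces of F^L with V = V_1 + ... + V_N, 1 ≤ s ≤ T < N integers, and suppose dim(Σ_{i∈Γ} V_i) = (T/N)·dim V for all Γ ⊆ [N] with |Γ| = T. Then for every subset Γ' ⊆ [N] with |Γ'| = s, dim(Σ_{i∈Γ'} V_i) ≤ (T/N)·dim V − (T − s)·⌈(dim V)/N⌉. -/

import Mathlib

open Module Finset

private lemma dimsum_mono {F : Type*} [Field F] {L N : ℕ}
    (V : Fin N → Submodule F (Fin L → F)) {Γ Δ : Finset (Fin N)} (h : Γ ⊆ Δ) :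
    finrank F ↥(⨆ i ∈ Γ, V i) ≤ finrank F ↥(⨆ i ∈ Δ, V i) :=
  Submodule.finrank_mono (biSup_mono fun _ hi => h hi)

private lemma dimsum_submodular {F : Type*} [Field F] {L N : ℕ}
    (V : Fin N → Submodule F (Fin L → F)) {Γ Δ : Finset (Fin N)} (hΓΔ : Γ ⊆ Δ) (j : Fin N) :
    finrank F ↥(⨆ i ∈ insert j Δ, V i) + finrank F ↥(⨆ i ∈ Γ, V i)
      ≤ finrank F ↥(⨆ i ∈ insert j Γ, V i) + finrank F ↥(⨆ i ∈ Δ, V i) := by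
  have e1 := Submodule.finrank_sup_add_finrank_inf_eq (V j) (⨆ i ∈ Γ, V i)
  have e2 := Submodule.finrank_sup_add_finrank_inf_eq (V j) (⨆ i ∈ Δ, V i)
  have e3 : finrank F ↥(V j ⊓ ⨆ i ∈ Γ, V i) ≤ finrank F ↥(V j ⊓ ⨆ i ∈ Δ, V i) :=
    Submodule.finrank_mono (inf_le_inf_left _ (biSup_mono fun _ hi => hΓΔ hi))
  rw [Finset.iSup_insert, Finset.iSup_insert]
  omega

private lemma dimsum_union_le {F : Type*} [Field F] {L N : ℕ}
    (V : Fin N → Submodule F (Fin L → F)) (Δ S : Finset (Fin N)) :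
    (finrank F ↥(⨆ i ∈ Δ ∪ S, V i) : ℚ)
      ≤ (finrank F ↥(⨆ i ∈ Δ, V i) : ℚ)
        + ∑ i ∈ S, ((finrank F ↥(⨆ i' ∈ insert i Δ, V i') : ℚ)
            - (finrank F ↥(⨆ i ∈ Δ, V i) : ℚ)) := by
  classical
  induction S using Finset.induction_on with
  | empty => rw [Finset.union_empty]; simp
  | insert _ _ hj ih =>
    rename_i j S
    rw [Finset.union_insert, Finset.sum_insert hj]
    have hB := dimsum_submodular V (Finset.subset_union_left (s₁ := Δ) (s₂ := S)) j
    have hB' : (finrank F ↥(⨆ i ∈ insert j (Δ ∪ S), V i) : ℚ)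
        + (finrank F ↥(⨆ i ∈ Δ, V i) : ℚ)
        ≤ (finrank F ↥(⨆ i ∈ insert j Δ, V i) : ℚ)
        + (finrank F ↥(⨆ i ∈ Δ ∪ S, V i) : ℚ) := by exact_mod_cast hB
    linarith

theorem dim_partial_sum_le (F : Type*) [Field F] (L N T s : ℕ)
    (hs : 1 ≤ s) (hsT : s ≤ T) (hTN : T < N)
    (V : Fin N → Submodule F (Fin L → F))
    (h : ∀ Γ : Finset (Fin N), Γ.card = T →
      (Module.finrank F ↥(⨆ i ∈ Γ, V i) : ℚ)
        = (T : ℚ) / (N : ℚ) * (Module.finrank F ↥(⨆ i, V i) : ℚ)) :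
    ∀ Γ' : Finset (Fin N), Γ'.card = s →
      (Module.finrank F ↥(⨆ i ∈ Γ', V i) : ℚ)
        ≤ (T : ℚ) / (N : ℚ) * (Module.finrank F ↥(⨆ i, V i) : ℚ)
          - ((T : ℚ) - (s : ℚ)) *
            ((⌈(Module.finrank F ↥(⨆ i, V i) : ℚ) / (N : ℚ)⌉ : ℤ) : ℚ) := by
  classical
  intro Γ' hΓ'
  set D : ℚ := (Module.finrank F ↥(⨆ i, V i) : ℚ) with hD
  set c : ℚ := (T : ℚ) / (N : ℚ) * D with hc
  set q : ℚ := ((⌈D / (N : ℚ)⌉ : ℤ) : ℚ) with hq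
  have hN0 : (0 : ℚ) < N := by
    have : 0 < N := by omega
    exact_mod_cast this
  have hT1 : 1 ≤ T := le_trans hs hsT
  have hUniv : (⨆ i ∈ (Finset.univ : Finset (Fin N)), V i) = ⨆ i, V i := by simp
  have hDuniv : (finrank F ↥(⨆ i ∈ (Finset.univ : Finset (Fin N)), V i) : ℚ) = D := by
    rw [hUniv]
  -- every (T-1)-set has dimension ≤ c - q
  have hTm1 : ∀ Δ : Finset (Fin N), Δ.card = T - 1 →
      (finrank F ↥(⨆ i ∈ Δ, V i) : ℚ) ≤ c - q := by
    intro Δ hΔ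
    set fΔ : ℚ := (finrank F ↥(⨆ i ∈ Δ, V i) : ℚ) with hfΔ
    -- extend Δ to a T-set
    obtain ⟨Γt, hΔΓt, hΓt⟩ := Finset.exists_superset_card_eq
      (n := T) (s := Δ) (by omega) (by simp [Fintype.card_fin]; omega)
    have hcΓt : (finrank F ↥(⨆ i ∈ Γt, V i) : ℚ) = c := h Γt hΓt
    have hmono : fΔ ≤ c := by
      rw [hfΔ, ← hcΓt]; exact_mod_cast dimsum_mono V hΔΓt
    -- the increment c - fΔ is an integer
    have hint : c - fΔ = ((finrank F ↥(⨆ i ∈ Γt, V i) - (finrank F ↥(⨆ i ∈ Δ, V i) : ℤ) : ℤ) : ℚ) := by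
      push_cast
      rw [← hcΓt]
    -- submodularity bound
    have hC := dimsum_union_le V Δ Finset.univ
    have hu : Δ ∪ (Finset.univ : Finset (Fin N)) = Finset.univ := by simp
    rw [hu, hDuniv] at hC
    have hsum : ∑ i ∈ (Finset.univ : Finset (Fin N)),
        ((finrank F ↥(⨆ i' ∈ insert i Δ, V i') : ℚ) - fΔ)
        = ∑ i ∈ Δᶜ, ((finrank F ↥(⨆ i' ∈ insert i Δ, V i') : ℚ) - fΔ) := by
      rw [← Finset.sum_add_sum_compl Δ]
      have : ∑ i ∈ Δ, ((finrank F ↥(⨆ i' ∈ insert i Δ, V i') : ℚ) - fΔ) = 0 := by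
        apply Finset.sum_eq_zero
        intro i hi
        rw [Finset.insert_eq_self.mpr hi]
        ring
      rw [this, zero_add]
    have hterm : ∀ i ∈ Δᶜ, ((finrank F ↥(⨆ i' ∈ insert i Δ, V i') : ℚ) - fΔ) = c - fΔ := by
      intro i hi
      rw [h (insert i Δ) (by rw [Finset.card_insert_of_notMem (Finset.mem_compl.mp hi)]; omega)]
    have hcard : (Δᶜ.card : ℚ) = (N : ℚ) - (T : ℚ) + 1 := by
      have : Δᶜ.card = N - (T - 1) := by
        rw [Finset.card_compl, hΔ, Fintype.card_fin]
      rw [this]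
      push_cast [Nat.cast_sub (by omega : T - 1 ≤ N), Nat.cast_sub (by omega : 1 ≤ T)]
      ring
    rw [hsum, Finset.sum_congr rfl hterm, Finset.sum_const, nsmul_eq_mul, hcard] at hC
    -- now: D ≤ fΔ + (N - T + 1) * (c - fΔ), derive D / N ≤ c - fΔ
    have hDN : D / N ≤ c - fΔ := by
      have hNT : (0 : ℚ) < (N : ℚ) - (T : ℚ) := by
        have : (T : ℚ) < (N : ℚ) := by exact_mod_cast hTN
        linarith
      have hkey : ((N : ℚ) - T) * (D / N) ≤ ((N : ℚ) - T) * (c - fΔ) := by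
        have hid : D - c = ((N : ℚ) - T) * (D / N) := by
          rw [hc]; field_simp
        linarith
      exact le_of_mul_le_mul_left hkey hNT
    -- ceiling bound
    have hceil : q ≤ c - fΔ := by
      rw [hint] at hDN ⊢
      rw [hq]; exact_mod_cast Int.ceil_le.mpr hDN
    linarith
  -- downward induction
  have hE : ∀ n : ℕ, ∀ Γ : Finset (Fin N), Γ.card + n = T →
      (finrank F ↥(⨆ i ∈ Γ, V i) : ℚ) ≤ c - (n : ℚ) * q := by
    intro n
    induction n with
    | zero =>
      intro Γ hΓ
      rw [h Γ (by omega)]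
      simp [hc]
    | succ n ih =>
      intro Γ hΓ
      -- pick i ∉ Γ
      have hne : Γᶜ.Nonempty := by
        rw [← Finset.card_pos, Finset.card_compl, Fintype.card_fin]
        omega
      obtain ⟨i, hi'⟩ := hne
      have hi : i ∉ Γ := Finset.mem_compl.mp hi'
      -- pick Δ with Γ ⊆ Δ ⊆ univ \ {i}, card T - 1
      have hΓsub : Γ ⊆ Finset.univ \ {i} := by
        intro x hx
        simp only [Finset.mem_sdiff, Finset.mem_univ, Finset.mem_singleton, true_and]
        rintro rfl; exact hi hx
      obtain ⟨Δ, hΓΔ, hΔsub, hΔcard⟩ := Finset.exists_subsuperset_card_eq (n := T - 1) hΓsub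
        (by omega) (by rw [Finset.card_sdiff_of_subset (by simp), Finset.card_univ, Fintype.card_fin]; simp; omega)
      have hiΔ : i ∉ Δ := fun hmem => by
        have := hΔsub hmem; simp at this
      -- insert i Δ is a T-set
      have hiT : (finrank F ↥(⨆ i' ∈ insert i Δ, V i') : ℚ) = c :=
        h _ (by rw [Finset.card_insert_of_notMem hiΔ]; omega)
      have hΔle : (finrank F ↥(⨆ i' ∈ Δ, V i') : ℚ) ≤ c - q := hTm1 Δ hΔcard
      have hih : (finrank F ↥(⨆ i' ∈ insert i Γ, V i') : ℚ) ≤ c - (n : ℚ) * q :=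
        ih (insert i Γ) (by rw [Finset.card_insert_of_notMem hi]; omega)
      have hB := dimsum_submodular V hΓΔ i
      have hB' : (finrank F ↥(⨆ i' ∈ insert i Δ, V i') : ℚ)
          + (finrank F ↥(⨆ i' ∈ Γ, V i') : ℚ)
          ≤ (finrank F ↥(⨆ i' ∈ insert i Γ, V i') : ℚ)
          + (finrank F ↥(⨆ i' ∈ Δ, V i') : ℚ) := by exact_mod_cast hB
      push_cast
      linarith
  have := hE (T - s) Γ' (by omega)
  have hcast : ((T - s : ℕ) : ℚ) = (T : ℚ) - (s : ℚ) := by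
    push_cast [Nat.cast_sub hsT]; ring
  rw [hcast] at this
  linarith
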